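/- The number of interval-closed sets of the ordinal sum of antichains a₁ ⊕ a₂ ⊕ ⋯ ⊕ aₙ (where aᵢ denotes an antichain with aᵢ elements) equals 1 + Σ_{1≤i≤n} (2^{aᵢ} − 1) + Σ_{1≤i<j≤n} (2^{aᵢ} − 1)(2^{aⱼ} − 1). -/

import Mathlib

open Finset

namespace ICSAux

/-- Nonempty subsets of `Fin m`. -/
def NE (m : ℕ) : Type := {s : Finset (Fin m) // s.Nonempty}

instance (m : ℕ) : Fintype (NE m) := by unfold NE; infer_instance

lemma card_NE (m : ℕ) : Nat.card (NE m) = 2 ^ m - 1 := by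
  rw [Nat.card_eq_fintype_card]
  unfold NE
  erw [Fintype.card_subtype]
  have h : Finset.univ.filter (fun s : Finset (Fin m) => s.Nonempty) =
      Finset.univ.erase (∅ : Finset (Fin m)) := by
    ext s
    simp [Finset.nonempty_iff_ne_empty]
  rw [h, Finset.card_erase_of_mem (Finset.mem_univ _), Finset.card_univ,
    Fintype.card_finset, Fintype.card_fin]

/-- Data type classifying interval-closed sets. -/
def D (n : ℕ) (a : Fin n → ℕ) : Type :=
  PUnit ⊕ ((Σ i : Fin n, NE (a i)) ⊕
    (Σ p : {p : Fin n × Fin n // p.1 < p.2}, NE (a p.1.1) × NE (a p.1.2)))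

/-- The interval-closure condition on fiber functions. -/
def Q {n : ℕ} {a : Fin n → ℕ} (f : ∀ i : Fin n, Finset (Fin (a i))) : Prop :=
  ∀ i j k : Fin n, i < k → k < j → (f i).Nonempty → (f j).Nonempty →
    f k = Finset.univ

def base {n : ℕ} {a : Fin n → ℕ} (i j : Fin n) : ∀ k : Fin n, Finset (Fin (a k)) :=
  fun k => if i < k ∧ k < j then Finset.univ else ∅

def G {n : ℕ} {a : Fin n → ℕ} : D n a → ∀ i : Fin n, Finset (Fin (a i))
  | .inl _ => fun _ => ∅
  | .inr (.inl ⟨i, s⟩) => Function.update (fun _ => ∅) i s.val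
  | .inr (.inr ⟨⟨(i, j), _⟩, s, t⟩) =>
      Function.update (Function.update (base i j) i s.val) j t.val

lemma G_single_apply {n : ℕ} {a : Fin n → ℕ} (i : Fin n) (s : NE (a i)) (k : Fin n) :
    G (a := a) (.inr (.inl ⟨i, s⟩)) k = if h : k = i then h ▸ s.val else ∅ := by
  simp only [G]
  rcases eq_or_ne k i with rfl | hk
  · simp
  · simp [Function.update_of_ne hk, hk]

lemma G_pair_apply_left {n : ℕ} {a : Fin n → ℕ} {i j : Fin n} (hij : i < j)
    (s : NE (a i)) (t : NE (a j)) :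
    G (a := a) (.inr (.inr ⟨⟨(i, j), hij⟩, s, t⟩)) i = s.val := by
  simp only [G]
  rw [Function.update_of_ne hij.ne, Function.update_self]

lemma G_pair_apply_right {n : ℕ} {a : Fin n → ℕ} {i j : Fin n} (hij : i < j)
    (s : NE (a i)) (t : NE (a j)) :
    G (a := a) (.inr (.inr ⟨⟨(i, j), hij⟩, s, t⟩)) j = t.val := by
  simp only [G]
  rw [Function.update_self]

lemma G_pair_apply_other {n : ℕ} {a : Fin n → ℕ} {i j : Fin n} (hij : i < j)
    (s : NE (a i)) (t : NE (a j)) {k : Fin n} (hki : k ≠ i) (hkj : k ≠ j) :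
    G (a := a) (.inr (.inr ⟨⟨(i, j), hij⟩, s, t⟩)) k = base i j k := by
  simp only [G]
  rw [Function.update_of_ne hkj, Function.update_of_ne hki]

lemma G_pair_support {n : ℕ} {a : Fin n → ℕ} {i j : Fin n} (hij : i < j)
    (s : NE (a i)) (t : NE (a j)) {k : Fin n}
    (hk : (G (a := a) (.inr (.inr ⟨⟨(i, j), hij⟩, s, t⟩)) k).Nonempty) :
    i ≤ k ∧ k ≤ j := by
  rcases eq_or_ne k i with rfl | hki
  · exact ⟨le_refl _, hij.le⟩
  rcases eq_or_ne k j with rfl | hkj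
  · exact ⟨hij.le, le_refl _⟩
  rw [G_pair_apply_other hij s t hki hkj] at hk
  unfold base at hk
  by_cases h : i < k ∧ k < j
  · exact ⟨h.1.le, h.2.le⟩
  · simp [h] at hk

lemma G_single_support {n : ℕ} {a : Fin n → ℕ} {i : Fin n} (s : NE (a i))
    {k : Fin n} (hk : (G (a := a) (.inr (.inl ⟨i, s⟩)) k).Nonempty) : k = i := by
  by_contra h
  rw [G_single_apply, dif_neg h] at hk
  exact absurd rfl (Finset.nonempty_iff_ne_empty.mp hk)

lemma QG {n : ℕ} {a : Fin n → ℕ} (d : D n a) : Q (G d) := by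
  intro i j k hik hkj hi hj
  match d with
  | .inl _ =>
      simp only [G] at hi
      exact absurd rfl (Finset.nonempty_iff_ne_empty.mp hi)
  | .inr (.inl ⟨i', s⟩) =>
      have h1 : i = i' := G_single_support s hi
      have h2 : j = i' := G_single_support s hj
      exact absurd (hik.trans hkj) (by rw [h1, h2]; exact lt_irrefl _)
  | .inr (.inr ⟨⟨(i', j'), hij'⟩, s, t⟩) =>
      have h1 := G_pair_support hij' s t hi
      have h2 := G_pair_support hij' s t hj
      have hki' : i' < k := lt_of_le_of_lt h1.1 hik
      have hkj' : k < j' := lt_of_lt_of_le hkj h2.2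
      rw [G_pair_apply_other hij' s t (ne_of_gt hki') (ne_of_lt hkj')]
      simp [base, hki', hkj']

lemma G_injective {n : ℕ} {a : Fin n → ℕ} : Function.Injective (G (a := a)) := by
  intro d1 d2 h
  match d1, d2 with
  | .inl _, .inl _ => rfl
  | .inl _, .inr (.inl ⟨i, s⟩) =>
      exfalso
      have h0 : (G (a := a) (.inl PUnit.unit) i).Nonempty := by
        have h1 : G (a := a) (.inl PUnit.unit) i = s.val := by
          rw [h, G_single_apply, dif_pos rfl]
        rw [h1]; exact s.2
      simp only [G] at h0
      exact absurd rfl (Finset.nonempty_iff_ne_empty.mp h0)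
  | .inr (.inl ⟨i, s⟩), .inl _ =>
      exfalso
      have h0 : (G (a := a) (.inl PUnit.unit) i).Nonempty := by
        have : G (a := a) (.inl PUnit.unit) i = s.val := by
          rw [← h, G_single_apply, dif_pos rfl]
        rw [this]; exact s.2
      simp only [G] at h0
      exact absurd rfl (Finset.nonempty_iff_ne_empty.mp h0)
  | .inl _, .inr (.inr ⟨⟨(i, j), hij⟩, s, t⟩) =>
      exfalso
      have h0 : (G (a := a) (.inl PUnit.unit) i).Nonempty := by
        rw [h, G_pair_apply_left hij]; exact s.2
      simp only [G] at h0
      exact absurd rfl (Finset.nonempty_iff_ne_empty.mp h0)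
  | .inr (.inr ⟨⟨(i, j), hij⟩, s, t⟩), .inl _ =>
      exfalso
      have h0 : (G (a := a) (.inl PUnit.unit) i).Nonempty := by
        rw [← h, G_pair_apply_left hij]; exact s.2
      simp only [G] at h0
      exact absurd rfl (Finset.nonempty_iff_ne_empty.mp h0)
  | .inr (.inl ⟨i, s⟩), .inr (.inl ⟨i', s'⟩) =>
      have hii' : i = i' := by
        apply G_single_support (a := a) s'
        rw [← h, G_single_apply, dif_pos rfl]; exact s.2
      subst hii'
      have hs : s = s' := by
        apply Subtype.ext
        have := congrFun h i
        rwa [G_single_apply, dif_pos rfl, G_single_apply, dif_pos rfl] at this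
      rw [hs]
  | .inr (.inl ⟨i, s⟩), .inr (.inr ⟨⟨(i', j'), hij'⟩, s', t'⟩) =>
      exfalso
      have h1 : i' = i := by
        apply G_single_support (a := a) s
        rw [h, G_pair_apply_left hij']; exact s'.2
      have h2 : j' = i := by
        apply G_single_support (a := a) s
        rw [h, G_pair_apply_right hij']; exact t'.2
      rw [h1, h2] at hij'
      exact lt_irrefl _ hij'
  | .inr (.inr ⟨⟨(i', j'), hij'⟩, s', t'⟩), .inr (.inl ⟨i, s⟩) =>
      exfalso
      have h1 : i' = i := by
        apply G_single_support (a := a) s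
        rw [← h, G_pair_apply_left hij']; exact s'.2
      have h2 : j' = i := by
        apply G_single_support (a := a) s
        rw [← h, G_pair_apply_right hij']; exact t'.2
      rw [h1, h2] at hij'
      exact lt_irrefl _ hij'
  | .inr (.inr ⟨⟨(i, j), hij⟩, s, t⟩), .inr (.inr ⟨⟨(i', j'), hij'⟩, s', t'⟩) =>
      have hi1 : i' ≤ i ∧ i ≤ j' := by
        apply G_pair_support hij' s' t'
        rw [← h, G_pair_apply_left hij]; exact s.2
      have hi2 : i ≤ i' ∧ i' ≤ j := by
        apply G_pair_support hij s t
        rw [h, G_pair_apply_left hij']; exact s'.2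
      have hj1 : i' ≤ j ∧ j ≤ j' := by
        apply G_pair_support hij' s' t'
        rw [← h, G_pair_apply_right hij]; exact t.2
      have hj2 : i ≤ j' ∧ j' ≤ j := by
        apply G_pair_support hij s t
        rw [h, G_pair_apply_right hij']; exact t'.2
      have hii' : i = i' := le_antisymm hi2.1 hi1.1
      have hjj' : j = j' := le_antisymm hj1.2 hj2.2
      subst hii'; subst hjj'
      have hs : s = s' := by
        apply Subtype.ext
        have := congrFun h i
        rwa [G_pair_apply_left hij, G_pair_apply_left hij'] at this
      have ht : t = t' := by
        apply Subtype.ext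
        have := congrFun h j
        rwa [G_pair_apply_right hij, G_pair_apply_right hij'] at this
      rw [hs, ht]

lemma G_surjective {n : ℕ} {a : Fin n → ℕ} {f : ∀ i : Fin n, Finset (Fin (a i))}
    (hf : Q f) : ∃ d : D n a, G d = f := by
  classical
  set S : Finset (Fin n) := Finset.univ.filter (fun i => (f i).Nonempty) with hS
  by_cases hSne : S.Nonempty
  · set i := S.min' hSne with hi
    set j := S.max' hSne with hj
    have hiS : i ∈ S := S.min'_mem hSne
    have hjS : j ∈ S := S.max'_mem hSne
    have hfi : (f i).Nonempty := by simpa [hS] using hiS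
    have hfj : (f j).Nonempty := by simpa [hS] using hjS
    have hmem : ∀ k : Fin n, (f k).Nonempty → i ≤ k ∧ k ≤ j := by
      intro k hk
      have hkS : k ∈ S := by simp [hS, hk]
      exact ⟨S.min'_le k hkS, S.le_max' k hkS⟩
    rcases eq_or_lt_of_le (S.min'_le j hjS) with hij | hij
    · -- i = j : single case
      refine ⟨.inr (.inl ⟨i, ⟨f i, hfi⟩⟩), funext fun k => ?_⟩
      erw [G_single_apply]
      rcases eq_or_ne k i with rfl | hk
      · simp
      · rw [dif_neg hk]
        have hij2 : i = j := hij
        refine (Finset.not_nonempty_iff_eq_empty.mp fun hkne => ?_).symm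
        have hmk := hmem k hkne
        exact hk (le_antisymm (le_of_le_of_eq hmk.2 hij2.symm) hmk.1)
    · -- i < j : pair case
      refine ⟨.inr (.inr ⟨⟨(i, j), hij⟩, ⟨f i, hfi⟩, ⟨f j, hfj⟩⟩), funext fun k => ?_⟩
      rcases eq_or_ne k i with rfl | hki
      · erw [G_pair_apply_left]
      rcases eq_or_ne k j with rfl | hkj
      · erw [G_pair_apply_right]
      erw [G_pair_apply_other hij _ _ hki hkj]
      by_cases hbet : i < k ∧ k < j
      · rw [hf i j k hbet.1 hbet.2 hfi hfj]
        simp [base, hbet, ← hi]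
      · have hkne : ¬ (f k).Nonempty := by
          intro hk
          have := hmem k hk
          exact hbet ⟨lt_of_le_of_ne this.1 (Ne.symm hki), lt_of_le_of_ne this.2 hkj⟩
        rw [Finset.not_nonempty_iff_eq_empty] at hkne
        simp [base, hbet, hkne, ← hi]
  · refine ⟨.inl PUnit.unit, funext fun k => ?_⟩
    have : ¬ (f k).Nonempty := fun hk => hSne ⟨k, by simp [hS, hk]⟩
    rw [Finset.not_nonempty_iff_eq_empty] at this
    simp [G, this]

lemma card_D (n : ℕ) (a : Fin n → ℕ) :
    Nat.card (D n a) =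
      1 + (∑ i : Fin n, (2 ^ (a i) - 1)) +
        ∑ p ∈ Finset.univ.filter (fun p : Fin n × Fin n => p.1 < p.2),
          (2 ^ (a p.1) - 1) * (2 ^ (a p.2) - 1) := by
  classical
  unfold D
  rw [Nat.card_sum, Nat.card_sum, ← add_assoc]
  have h1 : Nat.card PUnit = 1 := by simp
  have h2 : Nat.card (Σ i : Fin n, NE (a i)) = ∑ i : Fin n, (2 ^ (a i) - 1) := by
    rw [Nat.card_eq_fintype_card, Fintype.card_sigma]
    exact Finset.sum_congr rfl fun i _ => by rw [← Nat.card_eq_fintype_card, card_NE]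
  have h3 : Nat.card (Σ p : {p : Fin n × Fin n // p.1 < p.2}, NE (a p.1.1) × NE (a p.1.2))
      = ∑ p ∈ Finset.univ.filter (fun p : Fin n × Fin n => p.1 < p.2),
          (2 ^ (a p.1) - 1) * (2 ^ (a p.2) - 1) := by
    rw [Nat.card_eq_fintype_card, Fintype.card_sigma,
      Finset.sum_subtype (p := fun p : Fin n × Fin n => p.1 < p.2)
        (Finset.univ.filter (fun p : Fin n × Fin n => p.1 < p.2))
        (fun x => by simp) (fun p : Fin n × Fin n => (2 ^ (a p.1) - 1) * (2 ^ (a p.2) - 1))]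
    exact Finset.sum_congr rfl fun p _ => by
      rw [← Nat.card_eq_fintype_card, Nat.card_prod, card_NE, card_NE]
  rw [h1, h2, h3]

/-- The equivalence between finsets of a sigma type and fiber functions. -/
def fibEquiv (n : ℕ) (a : Fin n → ℕ) :
    Finset (Σ i : Fin n, Fin (a i)) ≃ ∀ i : Fin n, Finset (Fin (a i)) where
  toFun I i := Finset.univ.filter (fun v => (⟨i, v⟩ : Σ i, Fin (a i)) ∈ I)
  invFun f := Finset.univ.sigma f
  left_inv I := by ext ⟨i, v⟩; simp
  right_inv f := by funext i; ext v; simp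

lemma mem_fibEquiv {n : ℕ} {a : Fin n → ℕ} {I : Finset (Σ i : Fin n, Fin (a i))}
    {i : Fin n} {v : Fin (a i)} :
    v ∈ fibEquiv n a I i ↔ (⟨i, v⟩ : Σ i, Fin (a i)) ∈ I := by
  simp [fibEquiv]

end ICSAux

/-- The number of interval-closed sets of the ordinal sum of antichains
`a₁ ⊕ ⋯ ⊕ aₙ`. The poset has elements `Σ i : Fin n, Fin (a i)`, with the strict
order `x < z` iff `x.1 < z.1` (elements within one antichain are incomparable). -/
theorem card_ics_ordinal_sum_antichains (n : ℕ) (a : Fin n → ℕ) :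
    Nat.card {I : Finset (Σ i : Fin n, Fin (a i)) //
        ∀ x ∈ I, ∀ y ∈ I, ∀ z : Σ i : Fin n, Fin (a i),
          x.1 < z.1 → z.1 < y.1 → z ∈ I} =
      1 + (∑ i : Fin n, (2 ^ (a i) - 1)) +
        ∑ p ∈ Finset.univ.filter (fun p : Fin n × Fin n => p.1 < p.2),
          (2 ^ (a p.1) - 1) * (2 ^ (a p.2) - 1) := by
  classical
  have key : ∀ I : Finset (Σ i : Fin n, Fin (a i)),
      (∀ x ∈ I, ∀ y ∈ I, ∀ z : Σ i : Fin n, Fin (a i),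
        x.1 < z.1 → z.1 < y.1 → z ∈ I) ↔ ICSAux.Q (ICSAux.fibEquiv n a I) := by
    intro I
    constructor
    · intro hI i j k hik hkj hi hj
      obtain ⟨vi, hvi⟩ := hi
      obtain ⟨vj, hvj⟩ := hj
      rw [ICSAux.mem_fibEquiv] at hvi hvj
      ext v
      simp only [Finset.mem_univ, iff_true, ICSAux.mem_fibEquiv]
      exact hI ⟨i, vi⟩ hvi ⟨j, vj⟩ hvj ⟨k, v⟩ hik hkj
    · intro hQ x hx y hy z hxz hzy
      obtain ⟨z1, z2⟩ := z
      have hx1 : (ICSAux.fibEquiv n a I x.1).Nonempty :=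
        ⟨x.2, ICSAux.mem_fibEquiv.mpr hx⟩
      have hy1 : (ICSAux.fibEquiv n a I y.1).Nonempty :=
        ⟨y.2, ICSAux.mem_fibEquiv.mpr hy⟩
      have hk := hQ x.1 y.1 z1 hxz hzy hx1 hy1
      exact ICSAux.mem_fibEquiv.mp (hk ▸ Finset.mem_univ z2)
  rw [Nat.card_congr (Equiv.subtypeEquiv (ICSAux.fibEquiv n a) key)]
  rw [← ICSAux.card_D n a]
  exact (Nat.card_eq_of_bijective (fun d => ⟨ICSAux.G d, ICSAux.QG d⟩)
    ⟨fun d1 d2 h => ICSAux.G_injective (congrArg Subtype.val h),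
     fun f => by obtain ⟨d, hd⟩ := ICSAux.G_surjective f.2; exact ⟨d, Subtype.ext hd⟩⟩).symm
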